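/- Let N ≥ 2, let f_n > 0 for all n ∈ {1,…,N}, let η > 0, λ > 0, ρ > 0, and set H = Σ_{i=1}^N 1/f_i. Suppose (q_1,…,q_N) is a profile with q_n > 0 for all n satisfying the first-order conditions η/(Σ_{i=1}^N q_i) − η·q_n/(Σ_{i=1}^N q_i)² = λ·ρ/f_n for every n. Then Σ_{i=1}^N q_i = (N−1)·η/(λ·ρ·H). -/

import Mathlib

/-- any interior profile satisfying the data owners' first-order
conditions has total contribution `(N−1)·η/(λ·ρ·H)` with `H = Σ 1/f_i`. -/
theorem data_owners_total_contribution (N : ℕ) (hN : 2 ≤ N) (f : Fin N → ℝ)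
    (hf : ∀ n, 0 < f n) (η lam ρ : ℝ) (hη : 0 < η) (hlam : 0 < lam) (hρ : 0 < ρ)
    (q : Fin N → ℝ) (hq : ∀ n, 0 < q n)
    (hfoc : ∀ n, η / (∑ i, q i) - η * q n / (∑ i, q i) ^ 2 = lam * ρ / f n) :
    ∑ i, q i = ((N : ℝ) - 1) * η / (lam * ρ * ∑ i, 1 / f i) := by
  set S : ℝ := ∑ i, q i with hS
  have hSpos : 0 < S := Finset.sum_pos (fun i _ => hq i) ⟨⟨0, by omega⟩, Finset.mem_univ _⟩
  have hSne : S ≠ 0 := ne_of_gt hSpos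
  have hHpos : 0 < ∑ i, 1 / f i :=
    Finset.sum_pos (fun i _ => one_div_pos.mpr (hf i)) ⟨⟨0, by omega⟩, Finset.mem_univ _⟩
  have hHne : (∑ i, 1 / f i) ≠ 0 := ne_of_gt hHpos
  have hsum : ∑ n : Fin N, (η / S - η * q n / S ^ 2) = ∑ n : Fin N, lam * ρ / f n := by
    exact Finset.sum_congr rfl fun n _ => hfoc n
  have hL : ∑ n : Fin N, (η / S - η * q n / S ^ 2) = ((N : ℝ) - 1) * η / S := by
    rw [Finset.sum_sub_distrib, Finset.sum_const, Finset.card_univ, Fintype.card_fin]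
    have : ∑ n : Fin N, η * q n / S ^ 2 = η / S := by
      rw [← Finset.sum_div, ← Finset.mul_sum, ← hS]
      field_simp
    rw [this]
    have hN1 : (1 : ℝ) ≤ (N : ℝ) := by exact_mod_cast Nat.one_le_of_lt hN
    field_simp
    rw [nsmul_eq_mul, mul_left_comm, mul_div_assoc', mul_div_cancel_left₀ η hSne]
    ring
  have hR : ∑ n : Fin N, lam * ρ / f n = lam * ρ * ∑ i, 1 / f i := by
    rw [Finset.mul_sum]
    exact Finset.sum_congr rfl fun n _ => by rw [mul_one_div]
  rw [hL, hR] at hsum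
  have hlrH : lam * ρ * ∑ i, 1 / f i ≠ 0 := by positivity
  field_simp at hsum ⊢
  linarith [hsum]
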